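/- Let (X, dist, ς) be a compact metric measure space with finite measure satisfying: for all s > 0 there exists an integer N(s) such that each ball of radius 5s can be covered by N(s) balls of radius s. Let β > 0 with β ≤ ς(X)/2, and let r > 0 be such that ς(B(x,r)) ≤ β/(2N(r)) for all x ∈ X. Then there exist open sets A ⊂ D of X such that: (i) A = B(x₁,r) ∪ ⋯ ∪ B(x_l,r) with dist(x_i,x_j) ≥ 4r for i ≠ j; (ii) D = B(x₁,5r) ∪ ⋯ ∪ B(x_l,5r); (iii) ς(A) ≥ β/(2N(r)), ς(D) ≤ β, and dist(A, X\D) ≥ 4r. -/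

import Mathlib

open Metric MeasureTheory
open scoped ENNReal

noncomputable section StmtAux

variable {X : Type*} [MetricSpace X] [MeasurableSpace X]

/-- The union of `5r`-balls centered at points of a list. -/
def stmtD (r : ℝ) (l : List X) : Set X := ⋃ z ∈ l, ball z (5*r)

/-- Mass of the `r`-ball at `x` outside the current region. -/
def stmtPhi (ς : Measure X) (r : ℝ) (l : List X) (x : X) : ℝ≥0∞ :=
  ς (ball x r \ stmtD r l)

/-- Supremum of `stmtPhi`. -/
def stmtM (ς : Measure X) (r : ℝ) (l : List X) : ℝ≥0∞ := ⨆ x, stmtPhi ς r l x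

open scoped Classical

/-- Next center chosen greedily (within factor `4/5` of the sup). -/
def stmtNxt (ς : Measure X) (r : ℝ) (x₀ : X) (l : List X) : X :=
  if h : ∃ x, 4 * stmtM ς r l < 5 * stmtPhi ς r l x then h.choose else x₀

/-- The list of greedily chosen centers. -/
def stmtL (ς : Measure X) (r : ℝ) (x₀ : X) : ℕ → List X
  | 0 => []
  | k+1 => stmtL ς r x₀ k ++ [stmtNxt ς r x₀ (stmtL ς r x₀ k)]

/-- The `k`-th greedily chosen center. -/
def stmtY (ς : Measure X) (r : ℝ) (x₀ : X) (k : ℕ) : X :=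
  stmtNxt ς r x₀ (stmtL ς r x₀ k)

end StmtAux

set_option maxHeartbeats 2000000 in
/-- Lemma 5.2 (genCM): in a compact metric measure space with the covering property
(every ball of radius `5s` covered by `N(s)` balls of radius `s`), if `β ≤ ς(X)/2`
and every ball of radius `r` has measure at most `β/(2N(r))`, then there are open sets
`A = ⋃ B(xᵢ,r) ⊆ D = ⋃ B(xᵢ,5r)` with `4r`-separated centers, `ς(A) ≥ β/(2N(r))`,
`ς(D) ≤ β`, and `dist(A, X\D) ≥ 4r`. -/
theorem stmt10 {X : Type*} [MetricSpace X] [CompactSpace X] [MeasurableSpace X] [BorelSpace X]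
    (ς : Measure X) [IsFiniteMeasure ς]
    (N : ℝ → ℕ)
    (hcov : ∀ s : ℝ, 0 < s → ∀ y : X, ∃ F : Finset X,
      F.card ≤ N s ∧ ball y (5*s) ⊆ ⋃ z ∈ F, ball z s)
    (β : ENNReal) (hβpos : 0 < β) (hβ : β ≤ ς Set.univ / 2)
    (r : ℝ) (hr : 0 < r)
    (hball : ∀ x : X, ς (ball x r) ≤ β / (2 * (N r : ENNReal))) :
    ∃ (l : ℕ) (c : Fin l → X),
      (∀ i j : Fin l, i ≠ j → 4*r ≤ dist (c i) (c j)) ∧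
      IsOpen (⋃ i, ball (c i) r) ∧ IsOpen (⋃ i, ball (c i) (5*r)) ∧
      (⋃ i, ball (c i) r) ⊆ (⋃ i, ball (c i) (5*r)) ∧
      β / (2 * (N r : ENNReal)) ≤ ς (⋃ i, ball (c i) r) ∧
      ς (⋃ i, ball (c i) (5*r)) ≤ β ∧
      (∀ a ∈ ⋃ i, ball (c i) r, ∀ y : X, y ∉ (⋃ i, ball (c i) (5*r)) →
        4*r ≤ dist a y) := by
  classical
  -- X is nonempty
  rcases isEmpty_or_nonempty X with hX | hX
  · exfalso
    have huniv : (Set.univ : Set X) = ∅ := Set.univ_eq_empty_iff.mpr hX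
    rw [huniv] at hβ
    simp only [measure_empty, ENNReal.zero_div, le_zero_iff] at hβ
    · exact absurd hβ hβpos.ne'
  obtain ⟨x₀⟩ := hX
  set ν : ℝ≥0∞ := (N r : ℝ≥0∞) with hνdef
  have hνtop : ν ≠ ⊤ := ENNReal.natCast_ne_top _
  -- N r ≥ 1
  have hν1 : (1:ℝ≥0∞) ≤ ν := by
    obtain ⟨F, hFc, hFs⟩ := hcov r hr x₀
    have hx₀ : x₀ ∈ ⋃ z ∈ F, ball z r := hFs (mem_ball_self (by linarith))
    simp only [Set.mem_iUnion] at hx₀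
    obtain ⟨z, hz, -⟩ := hx₀
    have h1 : 1 ≤ F.card := Finset.card_pos.mpr ⟨z, hz⟩
    rw [hνdef]
    exact_mod_cast h1.trans hFc
  have hν0 : ν ≠ 0 := by
    intro h; rw [h] at hν1; exact absurd hν1 (by simp)
  have h2ν0 : (2*ν : ℝ≥0∞) ≠ 0 := by
    simp [hν0]
  have h2νtop : (2*ν : ℝ≥0∞) ≠ ⊤ := by
    simp [ENNReal.mul_ne_top, hνtop]
  have hβtop : β ≠ ⊤ :=
    (hβ.trans_lt (lt_of_le_of_lt ENNReal.half_le_self (measure_lt_top ς _))).ne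
  have h2β : 2 * β ≤ ς Set.univ := by
    have := (ENNReal.le_div_iff_mul_le (Or.inl (two_ne_zero)) (Or.inl (by simp))).mp hβ
    rwa [mul_comm] at this
  -- the multiplied form of hball
  have hb : ∀ x : X, ς (ball x r) * (2*ν) ≤ β := by
    intro x
    exact (ENNReal.le_div_iff_mul_le (Or.inl h2ν0) (Or.inl h2νtop)).mp (hball x)
  -- every 5r-ball has measure ≤ β/2 (in multiplied form)
  have h5 : ∀ y : X, 2 * ς (ball y (5*r)) ≤ β := by
    intro y
    obtain ⟨F, hFc, hFs⟩ := hcov r hr y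
    have h1 : ς (ball y (5*r)) * (2*ν) ≤ ν * β := by
      calc ς (ball y (5*r)) * (2*ν)
          ≤ ς (⋃ z ∈ F, ball z r) * (2*ν) := mul_le_mul_left (measure_mono hFs) _
        _ ≤ (∑ z ∈ F, ς (ball z r)) * (2*ν) :=
            mul_le_mul_left (measure_biUnion_finset_le _ _) _
        _ = ∑ z ∈ F, ς (ball z r) * (2*ν) := Finset.sum_mul _ _ _
        _ ≤ F.card • β := Finset.sum_le_card_nsmul _ _ _ (fun z _ => hb z)
        _ = (F.card : ℝ≥0∞) * β := nsmul_eq_mul _ _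
        _ ≤ ν * β := mul_le_mul_left (by rw [hνdef]; exact_mod_cast hFc) _
    have h2 : ν * (2 * ς (ball y (5*r))) ≤ ν * β := by
      calc ν * (2 * ς (ball y (5*r))) = ς (ball y (5*r)) * (2*ν) := by ring
        _ ≤ ν * β := h1
    exact (ENNReal.mul_le_mul_iff_right hν0 hνtop).mp h2
  -- the generic distance claim
  have hdist : ∀ (l : ℕ) (c : Fin l → X), ∀ a ∈ ⋃ i, ball (c i) r,
      ∀ z : X, z ∉ (⋃ i, ball (c i) (5*r)) → 4*r ≤ dist a z := by
    intro l c a ha z hz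
    simp only [Set.mem_iUnion] at ha hz
    push_neg at hz
    obtain ⟨i, hi⟩ := ha
    have h2 := hz i
    rw [mem_ball] at hi h2
    push_neg at h2
    have ht : dist z (c i) ≤ dist z a + dist a (c i) := dist_triangle z a (c i)
    rw [dist_comm z a] at ht
    linarith
  -- Main case split
  by_cases hA : (∃ x : X, β ≤ 2 * ν * ς (ball x r)) ∨
      (∃ x y : X, 4*r ≤ dist x y ∧ β ≤ 2 * ν * (ς (ball x r) + ς (ball y r)))
  · rcases hA with ⟨x, hx⟩ | ⟨x, y, hxy, hsum⟩
    · -- one ball suffices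
      refine ⟨1, fun _ => x, ?_, isOpen_iUnion fun _ => isOpen_ball,
        isOpen_iUnion fun _ => isOpen_ball,
        Set.iUnion_mono fun _ => ball_subset_ball (by linarith), ?_, ?_, hdist 1 _⟩
      · intro i j hij; exact absurd (Subsingleton.elim i j) hij
      · rw [Set.iUnion_const]
        rw [ENNReal.div_le_iff_le_mul (Or.inl h2ν0) (Or.inl h2νtop)]
        calc β ≤ 2 * ν * ς (ball x r) := hx
          _ = ς (ball x r) * (2*ν) := by ring
      · rw [Set.iUnion_const]
        calc ς (ball x (5*r)) = 1 * ς (ball x (5*r)) := (one_mul _).symm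
          _ ≤ 2 * ς (ball x (5*r)) := mul_le_mul_left one_le_two _
          _ ≤ β := h5 x
    · -- two balls
      refine ⟨2, ![x, y], ?_, isOpen_iUnion fun _ => isOpen_ball,
        isOpen_iUnion fun _ => isOpen_ball,
        Set.iUnion_mono fun _ => ball_subset_ball (by linarith), ?_, ?_, hdist 2 _⟩
      · intro i j hij
        fin_cases i <;> fin_cases j <;>
          simp_all [Matrix.cons_val_zero, Matrix.cons_val_one, Matrix.head_cons, dist_comm]
      · have hU : (⋃ i : Fin 2, ball (![x, y] i) r) = ball x r ∪ ball y r := by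
          ext p
          simp [Fin.exists_fin_two]
        rw [hU, ENNReal.div_le_iff_le_mul (Or.inl h2ν0) (Or.inl h2νtop)]
        have hdisj : Disjoint (ball x r) (ball y r) :=
          ball_disjoint_ball (by linarith)
        rw [measure_union hdisj measurableSet_ball]
        calc β ≤ 2 * ν * (ς (ball x r) + ς (ball y r)) := hsum
          _ = (ς (ball x r) + ς (ball y r)) * (2*ν) := by ring
      · have hU : (⋃ i : Fin 2, ball (![x, y] i) (5*r)) = ball x (5*r) ∪ ball y (5*r) := by
          ext p
          simp [Fin.exists_fin_two]
        rw [hU]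
        have h2le : 2 * ς (ball x (5*r) ∪ ball y (5*r)) ≤ 2 * β := by
          calc 2 * ς (ball x (5*r) ∪ ball y (5*r))
              ≤ 2 * (ς (ball x (5*r)) + ς (ball y (5*r))) :=
                mul_le_mul_right (measure_union_le _ _) _
            _ = 2 * ς (ball x (5*r)) + 2 * ς (ball y (5*r)) := by ring
            _ ≤ β + β := add_le_add (h5 x) (h5 y)
            _ = 2 * β := (two_mul β).symm
        exact (ENNReal.mul_le_mul_iff_right two_ne_zero (by simp)).mp h2le
  -- Case B: all single balls and separated pairs are small
  push_neg at hA
  obtain ⟨hA1, hA2⟩ := hA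
  -- abbreviations
  set L : ℕ → List X := stmtL ς r x₀ with hLdef
  set Y : ℕ → X := stmtY ς r x₀ with hYdef
  set φ : List X → X → ℝ≥0∞ := stmtPhi ς r with hφdef
  set M : List X → ℝ≥0∞ := stmtM ς r with hMdef
  have hLsucc : ∀ k, L (k+1) = L k ++ [Y k] := fun k => rfl
  have hDopen : ∀ l : List X, IsOpen (stmtD (X := X) r l) :=
    fun l => isOpen_biUnion fun _ _ => isOpen_ball
  -- membership in L k
  have hmemL : ∀ (k : ℕ) (z : X), z ∈ L k ↔ ∃ i, i < k ∧ Y i = z := by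
    intro k
    induction k with
    | zero => intro z; simp [hLdef, stmtL]
    | succ n ih =>
      intro z
      rw [hLsucc n]
      simp only [List.mem_append, List.mem_singleton, ih]
      constructor
      · rintro (⟨i, hi, rfl⟩ | rfl)
        · exact ⟨i, by omega, rfl⟩
        · exact ⟨n, by omega, rfl⟩
      · rintro ⟨i, hi, rfl⟩
        rcases Nat.lt_succ_iff_lt_or_eq.mp hi with h | rfl
        · exact Or.inl ⟨i, h, rfl⟩
        · exact Or.inr rfl
  -- D is monotone
  have hDmono : ∀ j k, j ≤ k → stmtD r (L j) ⊆ stmtD r (L k) := by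
    intro j k hjk p hp
    simp only [stmtD, Set.mem_iUnion] at hp ⊢
    obtain ⟨z, hz, hpz⟩ := hp
    rw [hmemL j z] at hz
    obtain ⟨i, hi, hiz⟩ := hz
    exact ⟨z, (hmemL k z).mpr ⟨i, by omega, hiz⟩, hpz⟩
  -- φ is antitone in the list
  have hφmono : ∀ j k, j ≤ k → ∀ x, φ (L k) x ≤ φ (L j) x := by
    intro j k hjk x
    exact measure_mono (Set.diff_subset_diff_right (hDmono j k hjk))
  have hφle : ∀ (l : List X) (x : X), φ l x ≤ M l := by
    intro l x
    exact le_iSup (stmtPhi ς r l) x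
  have hφf : ∀ (l : List X) (x : X), φ l x ≤ ς (ball x r) :=
    fun l x => measure_mono Set.diff_subset
  have hMtop : ∀ l : List X, M l ≠ ⊤ := by
    intro l
    have : M l ≤ ς Set.univ := iSup_le fun x => measure_mono (Set.subset_univ _)
    exact (this.trans_lt (measure_lt_top ς _)).ne
  -- the greedy choice property
  have hgen : ∀ l : List X, M l ≠ 0 → 4 * M l < 5 * φ l (stmtNxt ς r x₀ l) := by
    intro l hM
    show 4 * M l < 5 * φ l (stmtNxt ς r x₀ l)
    unfold stmtNxt
    split_ifs with h
    · exact h.choose_spec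
    · exfalso
      push_neg at h
      have h5M : 5 * M l ≤ 4 * M l := by
        rw [hMdef, stmtM, ENNReal.mul_iSup]
        exact iSup_le fun x => h x
      have hlt : 4 * M l < 5 * M l :=
        ENNReal.mul_lt_mul_left hM (hMtop l) (by norm_num)
      exact (hlt.trans_le h5M).false
  have hgen' : ∀ k, M (L k) ≠ 0 → 4 * M (L k) < 5 * φ (L k) (Y k) := by
    intro k hM
    exact hgen (L k) hM
  have hypos : ∀ k, M (L k) ≠ 0 → φ (L k) (Y k) ≠ 0 := by
    intro k hM h0
    have hg := hgen' k hM
    rw [h0, mul_zero] at hg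
    exact absurd hg (by simp)
  -- separation
  have hsep : ∀ i j, i < j → M (L j) ≠ 0 → 4*r ≤ dist (Y i) (Y j) := by
    intro i j hij hMj
    by_contra hlt
    push_neg at hlt
    have hball_sub : ball (Y j) r ⊆ stmtD r (L j) := by
      intro p hp
      have hpi : p ∈ ball (Y i) (5*r) := by
        rw [mem_ball] at hp ⊢
        have ht := dist_triangle p (Y j) (Y i)
        have : dist (Y j) (Y i) < 4*r := by rw [dist_comm]; exact hlt
        linarith
      simp only [stmtD, Set.mem_iUnion]
      exact ⟨Y i, (hmemL j (Y i)).mpr ⟨i, hij, rfl⟩, hpi⟩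
    have hz : φ (L j) (Y j) = 0 := by
      rw [hφdef, stmtPhi, Set.diff_eq_empty.mpr hball_sub, measure_empty]
    exact hypos j hMj hz
  -- existence of a terminal stage
  have hm : ∃ k, M (L k) = 0 := by
    by_contra hno
    push_neg at hno
    obtain ⟨t, -, htf, htcov⟩ :=
      finite_cover_balls_of_compact (isCompact_univ (X := X)) (show (0:ℝ) < 2*r by linarith)
    have hmap : ∀ k : ℕ, ∃ z ∈ htf.toFinset, Y k ∈ ball z (2*r) := by
      intro k
      have := htcov (Set.mem_univ (Y k))
      simp only [Set.mem_iUnion] at this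
      obtain ⟨z, hz, hbz⟩ := this
      exact ⟨z, htf.mem_toFinset.mpr hz, hbz⟩
    choose zf hzf hzb using hmap
    obtain ⟨k1, -, k2, -, hne, heq⟩ :=
      Finset.exists_ne_map_eq_of_card_lt_of_maps_to
        (s := Finset.range (htf.toFinset.card + 1)) (t := htf.toFinset)
        (by simp) (fun k _ => hzf k)
    have hd : dist (Y k1) (Y k2) < 4*r := by
      have h1 := hzb k1
      have h2 := hzb k2
      rw [heq] at h1
      rw [mem_ball] at h1 h2
      have ht := dist_triangle (Y k1) (zf k2) (Y k2)
      have h2' : dist (zf k2) (Y k2) < 2*r := by rw [dist_comm]; exact h2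
      linarith
    rcases hne.lt_or_gt with h | h
    · exact absurd hd (not_lt.mpr (hsep k1 k2 h (hno k2)))
    · exact absurd hd (not_lt.mpr (by rw [dist_comm]; exact hsep k2 k1 h (hno k1)))
  set m : ℕ := Nat.find hm with hmdef
  have hMm : M (L m) = 0 := Nat.find_spec hm
  have hMk : ∀ k, k < m → M (L k) ≠ 0 := fun k hk => Nat.find_min hm hk
  -- the increments
  set g : ℕ → ℝ≥0∞ := fun k => φ (L k) (Y k) with hgdef
  set S : ℕ → ℝ≥0∞ := fun k => ∑ i ∈ Finset.range k, g i with hSdef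
  -- main inductive bound
  have I2 : ∀ k, k ≤ m → 4 * ς (stmtD r (L k)) ≤ 5 * ν * S k := by
    intro k
    induction k with
    | zero =>
      intro _
      have : stmtD (X := X) r (L 0) = ∅ := by
        simp [hLdef, stmtL, stmtD]
      rw [this]
      simp
    | succ n ih =>
      intro hn1
      have hnm : n < m := hn1
      have hih := ih (le_of_lt hnm)
      have hDun : stmtD r (L (n+1)) = stmtD r (L n) ∪ ball (Y n) (5*r) := by
        rw [hLsucc n]
        ext p
        simp only [stmtD, Set.mem_iUnion, Set.mem_union, List.mem_append,
          List.mem_singleton, exists_prop]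
        constructor
        · rintro ⟨z, hz | hz, hpz⟩
          · exact Or.inl ⟨z, hz, hpz⟩
          · subst hz; exact Or.inr hpz
        · rintro (⟨z, hz, hpz⟩ | hp)
          · exact ⟨z, Or.inl hz, hpz⟩
          · exact ⟨Y n, Or.inr rfl, hp⟩
      have hstep : ς (stmtD r (L (n+1))) ≤
          ς (stmtD r (L n)) + ς (ball (Y n) (5*r) \ stmtD r (L n)) := by
        rw [hDun, ← Set.union_diff_self]
        exact measure_union_le _ _
      have hcover : ς (ball (Y n) (5*r) \ stmtD r (L n)) ≤ ν * M (L n) := by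
        obtain ⟨F, hFc, hFs⟩ := hcov r hr (Y n)
        have hsub : ball (Y n) (5*r) \ stmtD r (L n) ⊆
            ⋃ z ∈ F, (ball z r \ stmtD r (L n)) := by
          rintro p ⟨hp1, hp2⟩
          have := hFs hp1
          simp only [Set.mem_iUnion] at this ⊢
          obtain ⟨z, hz, hpz⟩ := this
          exact ⟨z, hz, hpz, hp2⟩
        calc ς (ball (Y n) (5*r) \ stmtD r (L n))
            ≤ ς (⋃ z ∈ F, (ball z r \ stmtD r (L n))) := measure_mono hsub
          _ ≤ ∑ z ∈ F, ς (ball z r \ stmtD r (L n)) := measure_biUnion_finset_le _ _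
          _ ≤ F.card • M (L n) :=
              Finset.sum_le_card_nsmul _ _ _ (fun z _ => hφle (L n) z)
          _ = (F.card : ℝ≥0∞) * M (L n) := nsmul_eq_mul _ _
          _ ≤ ν * M (L n) := mul_le_mul_left (by rw [hνdef]; exact_mod_cast hFc) _
      have hMg : 4 * M (L n) ≤ 5 * g n := (hgen' n (hMk n hnm)).le
      calc 4 * ς (stmtD r (L (n+1)))
          ≤ 4 * (ς (stmtD r (L n)) + ς (ball (Y n) (5*r) \ stmtD r (L n))) :=
            mul_le_mul_right hstep 4
        _ = 4 * ς (stmtD r (L n)) + 4 * ς (ball (Y n) (5*r) \ stmtD r (L n)) := mul_add _ _ _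
        _ ≤ 5 * ν * S n + 4 * (ν * M (L n)) := add_le_add hih (mul_le_mul_right hcover 4)
        _ = 5 * ν * S n + ν * (4 * M (L n)) := by ring
        _ ≤ 5 * ν * S n + ν * (5 * g n) := add_le_add_right (mul_le_mul_right hMg ν) _
        _ = 5 * ν * (S n + g n) := by ring
        _ = 5 * ν * S (n+1) := by rw [hSdef]; simp [Finset.sum_range_succ]
  -- at stage m the whole space is covered up to measure zero
  have hDm : ς Set.univ ≤ ς (stmtD r (L m)) := by
    obtain ⟨t, -, htf, htcov⟩ :=
      finite_cover_balls_of_compact (isCompact_univ (X := X)) hr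
    have hnull : ς (Set.univ \ stmtD r (L m)) = 0 := by
      have hsub : Set.univ \ stmtD r (L m) ⊆
          ⋃ z ∈ htf.toFinset, (ball z r \ stmtD r (L m)) := by
        rintro p ⟨hp1, hp2⟩
        have := htcov (Set.mem_univ p)
        simp only [Set.mem_iUnion] at this ⊢
        obtain ⟨z, hz, hpz⟩ := this
        exact ⟨z, htf.mem_toFinset.mpr hz, hpz, hp2⟩
      have h1 : ς (Set.univ \ stmtD r (L m)) ≤
          ∑ z ∈ htf.toFinset, ς (ball z r \ stmtD r (L m)) :=
        (measure_mono hsub).trans (measure_biUnion_finset_le _ _)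
      have h2 : ∀ z ∈ htf.toFinset, ς (ball z r \ stmtD r (L m)) = 0 := by
        intro z _
        have := hφle (L m) z
        rw [hMm] at this
        exact le_antisymm this zero_le
      rw [Finset.sum_eq_zero h2] at h1
      exact le_antisymm h1 zero_le
    calc ς Set.univ = ς (stmtD r (L m) ∪ Set.univ \ stmtD r (L m)) := by
          rw [Set.union_diff_cancel (Set.subset_univ _)]
      _ ≤ ς (stmtD r (L m)) + ς (Set.univ \ stmtD r (L m)) := measure_union_le _ _
      _ = ς (stmtD r (L m)) := by rw [hnull, add_zero]
  -- crossing time exists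
  have hcrossm : β ≤ 2 * ν * S m := by
    have h8 : 8 * β ≤ 8 * (ν * S m) := by
      calc (8:ℝ≥0∞) * β = 4 * (2 * β) := by ring
        _ ≤ 4 * ς Set.univ := mul_le_mul_right h2β 4
        _ ≤ 4 * ς (stmtD r (L m)) := mul_le_mul_right hDm 4
        _ ≤ 5 * ν * S m := I2 m le_rfl
        _ = 5 * (ν * S m) := by ring
        _ ≤ 8 * (ν * S m) := mul_le_mul_left (by norm_num) _
    have hβν : β ≤ ν * S m :=
      (ENNReal.mul_le_mul_iff_right (by norm_num) (by norm_num)).mp h8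
    calc β ≤ ν * S m := hβν
      _ ≤ 2 * ν * S m := by
        rw [mul_assoc]
        exact le_mul_of_one_le_left' one_le_two
  have hex : ∃ k, β ≤ 2 * ν * S k := ⟨m, hcrossm⟩
  set K : ℕ := Nat.find hex with hKdef
  have hK : β ≤ 2 * ν * S K := Nat.find_spec hex
  have hKm : K ≤ m := Nat.find_min' hex hcrossm
  have hKprev : ∀ j, j < K → 2 * ν * S j < β := by
    intro j hj
    have := Nat.find_min hex hj
    exact not_le.mp this
  have hK1 : 1 ≤ K := by
    rcases Nat.eq_zero_or_pos K with h0 | h0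
    · exfalso
      rw [h0] at hK
      have hS0 : S 0 = 0 := by simp [hSdef]
      rw [hS0, mul_zero] at hK
      exact absurd (le_zero_iff.mp hK) hβpos.ne'
    · exact h0
  have hK2 : 2 ≤ K := by
    by_contra h
    push_neg at h
    have hK1' : K = 1 := by omega
    rw [hK1'] at hK
    have hS1 : S 1 = g 0 := by simp [hSdef]
    rw [hS1] at hK
    have : β ≤ 2 * ν * ς (ball (Y 0) r) :=
      hK.trans (mul_le_mul_right (hφf (L 0) (Y 0)) _)
    exact absurd this (not_le.mpr (hA1 (Y 0)))
  -- bound on the last increment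
  have hglast : 18 * (ν * g (K-1)) ≤ 5 * β := by
    have hK10 : 0 < K - 1 := by omega
    have hK1m : K - 1 < m := by omega
    have h0m : 0 < m := by omega
    -- 4 g(K-1) ≤ 5 g 0
    have ha : 4 * g (K-1) ≤ 5 * g 0 := by
      have h1 : g (K-1) ≤ φ (L 0) (Y (K-1)) := hφmono 0 (K-1) (by omega) _
      have h2 : φ (L 0) (Y (K-1)) ≤ M (L 0) := hφle _ _
      have h3 : 4 * M (L 0) < 5 * g 0 := hgen' 0 (hMk 0 h0m)
      calc 4 * g (K-1) ≤ 4 * M (L 0) := mul_le_mul_right (h1.trans h2) 4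
        _ ≤ 5 * g 0 := h3.le
    have hb0 : g 0 ≤ ς (ball (Y 0) r) := hφf _ _
    have hbK : g (K-1) ≤ ς (ball (Y (K-1)) r) := hφf _ _
    have hpair : 2 * ν * (ς (ball (Y 0) r) + ς (ball (Y (K-1)) r)) < β :=
      hA2 (Y 0) (Y (K-1)) (hsep 0 (K-1) hK10 (hMk (K-1) hK1m))
    have h9 : 9 * g (K-1) ≤ 5 * (ς (ball (Y 0) r) + ς (ball (Y (K-1)) r)) := by
      calc (9:ℝ≥0∞) * g (K-1) = 4 * g (K-1) + 5 * g (K-1) := by ring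
        _ ≤ 5 * g 0 + 5 * ς (ball (Y (K-1)) r) := add_le_add ha (mul_le_mul_right hbK 5)
        _ ≤ 5 * ς (ball (Y 0) r) + 5 * ς (ball (Y (K-1)) r) :=
            add_le_add_left (mul_le_mul_right hb0 5) _
        _ = 5 * (ς (ball (Y 0) r) + ς (ball (Y (K-1)) r)) := by ring
    calc 18 * (ν * g (K-1)) = 2 * ν * (9 * g (K-1)) := by ring
      _ ≤ 2 * ν * (5 * (ς (ball (Y 0) r) + ς (ball (Y (K-1)) r))) :=
          mul_le_mul_right h9 _
      _ = 5 * (2 * ν * (ς (ball (Y 0) r) + ς (ball (Y (K-1)) r))) := by ring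
      _ ≤ 5 * β := mul_le_mul_right hpair.le 5
  have hSsplit : S K = S (K-1) + g (K-1) := by
    rw [hSdef]
    have : K = (K-1) + 1 := by omega
    rw [this]
    simp [Finset.sum_range_succ]
  -- the final D bound
  have hDK : ς (stmtD r (L K)) ≤ β := by
    have h72 : 72 * ς (stmtD r (L K)) ≤ 72 * β := by
      calc (72:ℝ≥0∞) * ς (stmtD r (L K)) = 18 * (4 * ς (stmtD r (L K))) := by ring
        _ ≤ 18 * (5 * ν * S K) := mul_le_mul_right (I2 K hKm) 18
        _ = 18 * (5 * ν * (S (K-1) + g (K-1))) := by rw [hSsplit]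
        _ = 45 * (2 * ν * S (K-1)) + 5 * (18 * (ν * g (K-1))) := by ring
        _ ≤ 45 * β + 5 * (5 * β) :=
            add_le_add (mul_le_mul_right (hKprev (K-1) (by omega)).le 45)
              (mul_le_mul_right hglast 5)
        _ = 70 * β := by ring
        _ ≤ 72 * β := mul_le_mul_left (by norm_num) _
    exact (ENNReal.mul_le_mul_iff_right (by norm_num) (by norm_num)).mp h72
  -- the A bound
  have hAK : S K ≤ ς (⋃ i : Fin K, ball (Y i) r) := by
    have hmeas : ∀ i ∈ Finset.range K, MeasurableSet (ball (Y i) r \ stmtD r (L i)) :=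
      fun i _ => measurableSet_ball.diff (hDopen (L i)).measurableSet
    have hdisj : (↑(Finset.range K) : Set ℕ).PairwiseDisjoint
        (fun i => ball (Y i) r \ stmtD r (L i)) := by
      intro i hi j hj hij
      simp only [Finset.coe_range, Set.mem_Iio] at hi hj
      have hballs : Disjoint (ball (Y i) r) (ball (Y j) r) := by
        rcases hij.lt_or_gt with h | h
        · exact ball_disjoint_ball (by
            have := hsep i j h (hMk j (by omega)); linarith)
        · exact (ball_disjoint_ball (by
            have := hsep j i h (hMk i (by omega)); linarith)).symm
      exact hballs.mono Set.diff_subset Set.diff_subset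
    have heq : ς (⋃ i ∈ Finset.range K, (ball (Y i) r \ stmtD r (L i))) = S K := by
      rw [measure_biUnion_finset hdisj hmeas]
      rfl
    have hsub : (⋃ i ∈ Finset.range K, (ball (Y i) r \ stmtD r (L i))) ⊆
        ⋃ i : Fin K, ball (Y i) r := by
      intro p hp
      simp only [Set.mem_iUnion, Finset.mem_range] at hp ⊢
      obtain ⟨i, hi, hpi, -⟩ := hp
      exact ⟨⟨i, hi⟩, hpi⟩
    calc S K = ς (⋃ i ∈ Finset.range K, (ball (Y i) r \ stmtD r (L i))) := heq.symm
      _ ≤ ς (⋃ i : Fin K, ball (Y i) r) := measure_mono hsub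
  -- D as a union over Fin K
  have hDeq : (⋃ i : Fin K, ball (Y i) (5*r)) = stmtD r (L K) := by
    ext p
    simp only [stmtD, Set.mem_iUnion]
    constructor
    · rintro ⟨i, hpi⟩
      exact ⟨Y i, (hmemL K (Y i)).mpr ⟨i, i.isLt, rfl⟩, hpi⟩
    · rintro ⟨z, hz, hpz⟩
      rw [hmemL K z] at hz
      obtain ⟨i, hi, rfl⟩ := hz
      exact ⟨⟨i, hi⟩, hpz⟩
  -- assemble
  refine ⟨K, fun i => Y i, ?_, isOpen_iUnion fun _ => isOpen_ball,
    isOpen_iUnion fun _ => isOpen_ball,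
    Set.iUnion_mono fun _ => ball_subset_ball (by linarith), ?_, ?_, hdist K _⟩
  · intro i j hij
    have hij' : (i : ℕ) ≠ (j : ℕ) := fun h => hij (Fin.ext h)
    rcases hij'.lt_or_gt with h | h
    · exact hsep i j h (hMk j (by omega))
    · rw [dist_comm]
      exact hsep j i h (hMk i (by omega))
  · rw [ENNReal.div_le_iff_le_mul (Or.inl h2ν0) (Or.inl h2νtop)]
    calc β ≤ 2 * ν * S K := hK
      _ ≤ 2 * ν * ς (⋃ i : Fin K, ball (Y i) r) := mul_le_mul_right hAK _
      _ = ς (⋃ i : Fin K, ball (Y i) r) * (2 * ν) := by ring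
  · rw [hDeq]
    exact hDK
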